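/- arXiv:1502.02711 — 8 statements merged into one kernel-verified Lean document; each statement's English description precedes it below -/
import Mathlib

section
/- Let C ⊆ Mat_{n×n}(F_q) be a set of q^n matrices containing the zero matrix and the identity matrix such that A − B is invertible for all distinct A, B ∈ C, and let (W, +, ∘) be the quasifield on W = F_q^n defined by w ∘ w' = w A(w'), where A(w) is the unique element of C whose first row is w. Then the set {k e_1 : k ∈ F_q} is contained in the kernel of W, i.e., for all k ∈ F_q and all w, w' ∈ W one has (k e_1) ∘ (w + w') = (k e_1) ∘ w + (k e_1) ∘ w' and (k e_1) ∘ (w ∘ w') = ((k e_1) ∘ w) ∘ w'. -/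
/-- Let `C ⊆ Mat_{n×n}(F_q)` be a set of `q^n` matrices containing `0` and the
identity, with `A - B` invertible for all distinct `A, B ∈ C`, and let
`w ∘ w' := w ⬝ A w'` be the quasifield multiplication on `F_q^n`, where `A w`
is the unique element of `C` whose first row is `w`.  Then the scalar
multiples `k • e₁` of `e₁ = (1,0,…,0)` lie in the kernel of the quasifield:
`(k e₁) ∘ (w + w') = (k e₁) ∘ w + (k e₁) ∘ w'` and
`(k e₁) ∘ (w ∘ w') = ((k e₁) ∘ w) ∘ w'` for all `k ∈ F_q`, `w, w' ∈ F_q^n`. -/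
theorem field_embeds_in_kernel_of_MRD_quasifield
    {K : Type*} [Field K] [Fintype K] {n : ℕ} (hn : 0 < n)
    (C : Set (Matrix (Fin n) (Fin n) K))
    (hcard : C.ncard = Fintype.card K ^ n)
    (h0 : (0 : Matrix (Fin n) (Fin n) K) ∈ C)
    (h1 : (1 : Matrix (Fin n) (Fin n) K) ∈ C)
    (hreg : ∀ A ∈ C, ∀ B ∈ C, A ≠ B → IsUnit (A - B))
    (A : (Fin n → K) → Matrix (Fin n) (Fin n) K)
    (hA : ∀ w, A w ∈ C ∧ Matrix.vecMul (Pi.single (⟨0, hn⟩ : Fin n) (1 : K)) (A w) = w) :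
    letI mul : (Fin n → K) → (Fin n → K) → (Fin n → K) :=
      fun w w' => Matrix.vecMul w (A w')
    letI e₁ : Fin n → K := Pi.single (⟨0, hn⟩ : Fin n) (1 : K)
    ∀ (k : K) (w w' : Fin n → K),
      mul (k • e₁) (w + w') = mul (k • e₁) w + mul (k • e₁) w' ∧
      mul (k • e₁) (mul w w') = mul (mul (k • e₁) w) w' := by
  intro k w w'
  have key : ∀ x : Fin n → K, Matrix.vecMul (k • (Pi.single (⟨0, hn⟩ : Fin n) (1 : K) : Fin n → K)) (A x) = k • x := by
    intro x
    rw [Matrix.smul_vecMul, (hA x).2]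
  refine ⟨?_, ?_⟩
  · simp [key, smul_add]
  · show Matrix.vecMul _ (A (Matrix.vecMul w (A w'))) = Matrix.vecMul (Matrix.vecMul _ (A w)) (A w')
    rw [key, key, Matrix.smul_vecMul]
end

section
/- Let Q be a finite (right) quasifield and let K be a subfield of Ker Q, so that Q is a left K-vector space via k·x := k∘x; suppose dim_K Q = n. For each a ∈ Q let R(a) ∈ Mat_{n×n}(K) be the matrix (with respect to a fixed K-basis of Q, acting on row vectors) of the map x ↦ x∘a, so that xR(a) = x∘a for all x ∈ Q. Then the set C = {R(a) : a ∈ Q} ⊆ Mat_{n×n}(K) has exactly |K|^n elements and R(a) − R(b) is invertible for all a ≠ b in Q; that is, C is an MRD code in Mat_{n×n}(K) with minimum distance n containing the zero and identity matrices. -/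
/-- A finite (right) quasifield structure on an additive abelian group. -/
structure IsQuasifield {Q : Type*} [AddCommGroup Q] (mul : Q → Q → Q) (e : Q) : Prop where
  zero_mul : ∀ a, mul 0 a = 0
  mul_zero : ∀ a, mul a 0 = 0
  one_mul : ∀ a, mul e a = a
  mul_one : ∀ a, mul a e = a
  right_solve : ∀ a b, a ≠ 0 → ∃! x, mul a x = b
  left_solve : ∀ a b c, a ≠ b → ∃! x, mul x a = mul x b + c
  add_mul : ∀ a b c, mul (a + b) c = mul a c + mul b c

/-- The kernel of a quasifield: the elements that distribute from the left and
associate from the left. -/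
def QKernel {Q : Type*} [AddCommGroup Q] (mul : Q → Q → Q) : Set Q :=
  {c | ∀ a b : Q, mul c (a + b) = mul c a + mul c b ∧ mul c (mul a b) = mul (mul c a) b}

/-- Let `Q` be a finite quasifield and `K` a subfield of `Ker Q` (realized as a
finite field `K` embedded in `Q` via `ι`, landing in the kernel), so that `Q`
is a left `K`-vector space via `k • x := (ι k) ∘ x`; let `b` be a `K`-basis of
`Q` of size `n` with coordinate map `rep`, and let `R a` be the matrix of
`x ↦ x ∘ a` in this basis (row-vector convention: `rep (x ∘ a) = rep x ⬝ R a`).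
Then `C = {R a : a ∈ Q}` has exactly `|K|^n` elements, `R a - R b` is
invertible for all `a ≠ b`, and `C` contains the zero and identity matrices;
i.e. `C` is an MRD code in `Mat_{n×n}(K)` with minimum distance `n`. -/
theorem quasifield_gives_MRD_code
    {Q : Type*} [AddCommGroup Q] [Fintype Q] (mul : Q → Q → Q) (e : Q)
    (hQ : IsQuasifield mul e)
    {K : Type*} [Field K] [Fintype K] (ι : K → Q)
    (hι_inj : Function.Injective ι)
    (hι_add : ∀ k k', ι (k + k') = ι k + ι k')
    (hι_mul : ∀ k k', ι (k * k') = mul (ι k) (ι k'))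
    (hι_one : ι 1 = e)
    (hι_ker : ∀ k, ι k ∈ QKernel mul)
    {n : ℕ} (b : Fin n → Q) (rep : Q → Fin n → K)
    (hrep : ∀ x : Q, x = ∑ i, mul (ι (rep x i)) (b i))
    (hrep_unique : ∀ (x : Q) (c : Fin n → K), x = ∑ i, mul (ι (c i)) (b i) → c = rep x)
    (R : Q → Matrix (Fin n) (Fin n) K)
    (hR : ∀ x a : Q, rep (mul x a) = Matrix.vecMul (rep x) (R a)) :
    (Set.range R).ncard = Fintype.card K ^ n ∧
      (∀ a b : Q, a ≠ b → IsUnit (R a - R b)) ∧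
      (0 : Matrix (Fin n) (Fin n) K) ∈ Set.range R ∧
      (1 : Matrix (Fin n) (Fin n) K) ∈ Set.range R := by
  classical
  -- rep is injective
  have hrep_inj : Function.Injective rep := by
    intro x y hxy
    rw [hrep x, hrep y, hxy]
  -- rep is surjective
  have hrep_surj : Function.Surjective rep := by
    intro c
    exact ⟨∑ i, mul (ι (c i)) (b i), (hrep_unique _ c rfl).symm⟩
  -- rep 0 = 0
  have hι0 : ι 0 = 0 := by
    have h := hι_add 0 0
    rw [add_zero] at h
    exact add_eq_right.mp h.symm
  have hrep0 : rep (0 : Q) = 0 := by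
    refine (hrep_unique 0 0 ?_).symm
    simp [hι0, hQ.zero_mul]
  -- R is injective
  have hR_inj : Function.Injective R := by
    intro a a' h
    have := hR e a
    rw [h, ← hR e a'] at this
    have := hrep_inj this
    rwa [hQ.one_mul, hQ.one_mul] at this
  constructor
  · have h1 : (Set.range R).ncard = Nat.card Q := by
      rw [← Nat.card_range_of_injective hR_inj, Nat.card_coe_set_eq]
    have h2 : Fintype.card Q = Fintype.card (Fin n → K) :=
      Fintype.card_of_bijective ⟨hrep_inj, hrep_surj⟩
    rw [h1, Nat.card_eq_fintype_card, h2]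
    simp
  refine ⟨?_, ?_, ?_⟩
  · intro a a' hne
    rw [← Matrix.vecMul_injective_iff_isUnit]
    have h0 : ∀ v : Fin n → K, Matrix.vecMul v (R a - R a') = 0 → v = 0 := by
      intro v hv
      obtain ⟨x, rfl⟩ := hrep_surj v
      have hxx : mul x a = mul x a' := by
        apply hrep_inj
        rw [hR, hR]
        have := sub_eq_zero.mp (by rwa [Matrix.vecMul_sub] at hv)
        exact this
      have huniq := hQ.left_solve a a' 0 hne
      obtain ⟨y, hy, hy_uniq⟩ := huniq
      have hx0 : x = y := hy_uniq x (by simp [hxx])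
      have h00 : (0 : Q) = y := hy_uniq 0 (by simp [hQ.zero_mul])
      rw [hx0, ← h00, hrep0]
    intro v w hvw
    have hvw' : Matrix.vecMul v (R a - R a') = Matrix.vecMul w (R a - R a') := hvw
    have : Matrix.vecMul (v - w) (R a - R a') = 0 := by
      rw [Matrix.sub_vecMul, hvw', sub_self]
    exact sub_eq_zero.mp (h0 _ this)
  · refine ⟨0, ?_⟩
    symm
    ext i j
    have : Matrix.vecMul (Pi.single i 1) (R 0) = 0 := by
      obtain ⟨x, hx⟩ := hrep_surj (Pi.single i 1)
      rw [← hx, ← hR, hQ.mul_zero, hrep0]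
    have := congrFun this j
    rw [Matrix.single_one_vecMul] at this
    simpa using this.symm
  · refine ⟨e, ?_⟩
    symm
    ext i j
    have : Matrix.vecMul (Pi.single i 1) (R e) = Pi.single i 1 := by
      obtain ⟨x, hx⟩ := hrep_surj (Pi.single i 1)
      rw [← hx, ← hR, hQ.mul_one]
    have := congrFun this j
    rw [Matrix.single_one_vecMul] at this
    rw [show (R e).row i j = R e i j from rfl] at this
    rw [this, Matrix.one_apply, Pi.single_apply]
    simp [eq_comm]
end

section
/- Let Q be a finite (right) quasifield. Then the kernel Ker Q is a finite field under the restrictions of + and ∘; explicitly: Ker Q contains 0 and the identity e, is closed under + and ∘, the multiplication ∘ restricted to Ker Q is associative and commutative, and every nonzero element of Ker Q has a multiplicative inverse lying in Ker Q. -/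
section Aux

variable {Q : Type*} [AddCommGroup Q] {mul : Q → Q → Q} {e : Q}

lemma qk_zero_mem (hQ : IsQuasifield mul e) : (0 : Q) ∈ QKernel mul := by
  intro a b
  simp [hQ.zero_mul]

lemma qk_e_mem (hQ : IsQuasifield mul e) : e ∈ QKernel mul := by
  intro a b
  simp [hQ.one_mul]

lemma qk_add_mem (hQ : IsQuasifield mul e) {a b : Q} (ha : a ∈ QKernel mul)
    (hb : b ∈ QKernel mul) : a + b ∈ QKernel mul := by
  intro x y
  constructor
  · rw [hQ.add_mul, hQ.add_mul, hQ.add_mul, (ha x y).1, (hb x y).1]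
    abel
  · rw [hQ.add_mul, (ha x y).2, (hb x y).2, hQ.add_mul, hQ.add_mul]

lemma qk_neg_mul (hQ : IsQuasifield mul e) (a x : Q) : mul (-a) x = -(mul a x) := by
  have : mul (a + -a) x = mul a x + mul (-a) x := hQ.add_mul a (-a) x
  rw [add_neg_cancel, hQ.zero_mul] at this
  exact eq_neg_of_add_eq_zero_right this.symm

lemma qk_neg_mem (hQ : IsQuasifield mul e) {a : Q} (ha : a ∈ QKernel mul) :
    -a ∈ QKernel mul := by
  intro x y
  rw [qk_neg_mul hQ, qk_neg_mul hQ, qk_neg_mul hQ, qk_neg_mul hQ, qk_neg_mul hQ,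
    (ha x y).1, (ha x y).2]
  constructor
  · abel
  · rfl

lemma qk_mul_mem (hQ : IsQuasifield mul e) {a b : Q} (ha : a ∈ QKernel mul)
    (hb : b ∈ QKernel mul) : mul a b ∈ QKernel mul := by
  intro x y
  constructor
  · rw [← (ha b x).2, ← (ha b y).2, ← (ha b (x + y)).2, (hb x y).1, (ha _ _).1]
  · rw [← (ha b (mul x y)).2, (hb x y).2, (ha _ _).2, (ha b x).2]

lemma qk_cancel (hQ : IsQuasifield mul e) {a x y : Q} (ha : a ≠ 0)
    (h : mul a x = mul a y) : x = y := by
  obtain ⟨z, -, hz⟩ := hQ.right_solve a (mul a y) ha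
  rw [hz x h, hz y rfl]

end Aux

/-- The kernel of a finite quasifield `Q` is a finite field under the
restrictions of `+` and `∘`: it contains `0` and the identity `e`, is closed
under `+` and `∘`, the multiplication restricted to it is associative and
commutative, and every nonzero element of the kernel has a multiplicative
inverse lying in the kernel. -/
theorem kernel_of_finite_quasifield_is_field
    {Q : Type*} [AddCommGroup Q] [Fintype Q] (mul : Q → Q → Q) (e : Q)
    (hQ : IsQuasifield mul e) :
    (0 : Q) ∈ QKernel mul ∧
    e ∈ QKernel mul ∧
    (∀ a ∈ QKernel mul, ∀ b ∈ QKernel mul, a + b ∈ QKernel mul) ∧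
    (∀ a ∈ QKernel mul, ∀ b ∈ QKernel mul, mul a b ∈ QKernel mul) ∧
    (∀ a ∈ QKernel mul, ∀ b ∈ QKernel mul, ∀ c ∈ QKernel mul,
      mul (mul a b) c = mul a (mul b c)) ∧
    (∀ a ∈ QKernel mul, ∀ b ∈ QKernel mul, mul a b = mul b a) ∧
    (∀ a ∈ QKernel mul, a ≠ 0 → ∃ b ∈ QKernel mul, mul a b = e) := by
  classical
  refine ⟨qk_zero_mem hQ, qk_e_mem hQ, fun a ha b hb => qk_add_mem hQ ha hb,
    fun a ha b hb => qk_mul_mem hQ ha hb,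
    fun a ha b _ c _ => ((ha b c).2).symm, ?_⟩
  by_cases he : e = 0
  · -- degenerate case: Q is trivial
    have hall : ∀ x : Q, x = 0 := by
      intro x
      have := hQ.one_mul x
      rw [he, hQ.zero_mul] at this
      exact this.symm
    constructor
    · intro a _ b _
      rw [hall a, hall b]
    · intro a _ ha
      exact absurd (hall a) ha
  -- main case: build a field structure on the kernel
  set K := {x : Q // x ∈ QKernel mul} with hKdef
  letI : Zero K := ⟨⟨0, qk_zero_mem hQ⟩⟩
  letI : One K := ⟨⟨e, qk_e_mem hQ⟩⟩
  letI : Add K := ⟨fun a b => ⟨a.1 + b.1, qk_add_mem hQ a.2 b.2⟩⟩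
  letI : Neg K := ⟨fun a => ⟨-a.1, qk_neg_mem hQ a.2⟩⟩
  letI : Mul K := ⟨fun a b => ⟨mul a.1 b.1, qk_mul_mem hQ a.2 b.2⟩⟩
  have val_add : ∀ a b : K, (a + b).1 = a.1 + b.1 := fun _ _ => rfl
  have val_mul : ∀ a b : K, (a * b).1 = mul a.1 b.1 := fun _ _ => rfl
  have val_zero : (0 : K).1 = 0 := rfl
  have val_one : (1 : K).1 = e := rfl
  letI addcg : AddCommGroup K :=
    { add_assoc := fun a b c => Subtype.ext (add_assoc a.1 b.1 c.1)
      zero_add := fun a => Subtype.ext (zero_add a.1)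
      add_zero := fun a => Subtype.ext (add_zero a.1)
      neg_add_cancel := fun a => Subtype.ext (neg_add_cancel a.1)
      add_comm := fun a b => Subtype.ext (add_comm a.1 b.1)
      nsmul := nsmulRec
      zsmul := zsmulRec }
  letI ring : Ring K :=
    { addcg with
      mul_assoc := fun a b c => Subtype.ext ((a.2 b.1 c.1).2).symm
      one_mul := fun a => Subtype.ext (hQ.one_mul a.1)
      mul_one := fun a => Subtype.ext (hQ.mul_one a.1)
      left_distrib := fun a b c => Subtype.ext ((a.2 b.1 c.1).1)
      right_distrib := fun a b c => Subtype.ext (hQ.add_mul a.1 b.1 c.1)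
      zero_mul := fun a => Subtype.ext (hQ.zero_mul a.1)
      mul_zero := fun a => Subtype.ext (hQ.mul_zero a.1) }
  haveI : Nontrivial K := ⟨⟨1, 0, fun h => he (congrArg Subtype.val h)⟩⟩
  haveI : NoZeroDivisors K := by
    constructor
    intro a b hab
    by_cases ha : a = 0
    · exact Or.inl ha
    · right
      have ha' : a.1 ≠ 0 := fun h => ha (Subtype.ext h)
      apply Subtype.ext
      apply qk_cancel hQ ha'
      rw [show ((0 : K) : Q) = 0 from rfl, hQ.mul_zero]
      exact congrArg Subtype.val hab
  haveI : IsDomain K := NoZeroDivisors.to_isDomain K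
  haveI : Fintype K := Fintype.ofFinite K
  letI dr : DivisionRing K := Fintype.divisionRingOfIsDomain K
  letI fld : Field K := littleWedderburn K
  constructor
  · intro a ha b hb
    exact congrArg Subtype.val (mul_comm (⟨a, ha⟩ : K) ⟨b, hb⟩)
  · intro a ha hane
    set x : K := ⟨a, ha⟩ with hx
    have hx0 : x ≠ 0 := fun h => hane (congrArg Subtype.val h)
    refine ⟨(x⁻¹).1, (x⁻¹).2, ?_⟩
    exact congrArg Subtype.val (mul_inv_cancel₀ hx0)
end

section
/- Let Q be a finite (right) quasifield with identity e, let K be a subfield of Ker Q with dim_K Q = n, and for a ∈ Q let R(a) ∈ Mat_{n×n}(K) be the matrix of the map x ↦ x∘a with respect to a fixed K-basis of Q. If the set C = {R(a) : a ∈ Q} is closed under matrix addition, then R(a) + R(b) = R(a + b) for all a, b ∈ Q, and Q satisfies the left distributive law x∘(a + b) = x∘a + x∘b for all x, a, b ∈ Q; that is, Q is a semifield. -/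
/-- Let `Q` be a finite quasifield with identity `e`, `K` a subfield of
`Ker Q` (a finite field embedded in `Q` via `ι`, landing in the kernel) with
`dim_K Q = n`, and for `a ∈ Q` let `R a` be the matrix of `x ↦ x ∘ a` with
respect to a fixed `K`-basis of `Q` (row-vector convention).  If the code
`C = {R a : a ∈ Q}` is closed under matrix addition, then
`R a + R b = R (a + b)` for all `a, b`, and `Q` satisfies the left
distributive law, i.e. `Q` is a semifield. -/
theorem additively_closed_MRD_code_gives_semifield
    {Q : Type*} [AddCommGroup Q] [Fintype Q] (mul : Q → Q → Q) (e : Q)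
    (hQ : IsQuasifield mul e)
    {K : Type*} [Field K] [Fintype K] (ι : K → Q)
    (hι_inj : Function.Injective ι)
    (hι_add : ∀ k k', ι (k + k') = ι k + ι k')
    (hι_mul : ∀ k k', ι (k * k') = mul (ι k) (ι k'))
    (hι_one : ι 1 = e)
    (hι_ker : ∀ k, ι k ∈ QKernel mul)
    {n : ℕ} (b : Fin n → Q) (rep : Q → Fin n → K)
    (hrep : ∀ x : Q, x = ∑ i, mul (ι (rep x i)) (b i))
    (hrep_unique : ∀ (x : Q) (c : Fin n → K), x = ∑ i, mul (ι (c i)) (b i) → c = rep x)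
    (R : Q → Matrix (Fin n) (Fin n) K)
    (hR : ∀ x a : Q, rep (mul x a) = Matrix.vecMul (rep x) (R a))
    (hclosed : ∀ A ∈ Set.range R, ∀ B ∈ Set.range R, A + B ∈ Set.range R) :
    (∀ a b : Q, R a + R b = R (a + b)) ∧
      ∀ x a b : Q, mul x (a + b) = mul x a + mul x b := by

  have rep_inj : ∀ x y : Q, rep x = rep y → x = y := by
    intro x y h
    rw [hrep x, hrep y, h]
  have rep_add : ∀ x y : Q, rep (x + y) = rep x + rep y := by
    intro x y
    refine (hrep_unique _ _ ?_).symm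
    calc x + y = ∑ i, mul (ι (rep x i)) (b i) + ∑ i, mul (ι (rep y i)) (b i) := by
          rw [← hrep, ← hrep]
      _ = ∑ i, mul (ι ((rep x + rep y) i)) (b i) := by
          rw [← Finset.sum_add_distrib]
          refine Finset.sum_congr rfl fun i _ => ?_
          simp [hι_add, hQ.add_mul]
  have main : ∀ a c : Q, R a + R c = R (a + c) := by
    intro a c
    obtain ⟨d, hd⟩ := hclosed (R a) ⟨a, rfl⟩ (R c) ⟨c, rfl⟩
    have hx : ∀ x : Q, mul x a + mul x c = mul x d := by
      intro x
      apply rep_inj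
      rw [rep_add, hR, hR, hR, hd, Matrix.vecMul_add]
    have hd2 : d = a + c := by
      have := hx e
      rw [hQ.one_mul, hQ.one_mul, hQ.one_mul] at this
      exact this.symm
    rw [← hd2, hd]
  refine ⟨main, fun x a c => ?_⟩
  apply rep_inj
  rw [rep_add, hR, hR, hR, ← main, Matrix.vecMul_add]
end

section
/- Let S be a finite semifield, let K be a subfield of Ker S with dim_K S = n, and for a ∈ S let R(a) ∈ Mat_{n×n}(K) be the matrix of the map x ↦ x∘a with respect to a fixed K-basis of S whose first vector is the identity e. Then the code C = {R(a) : a ∈ S} is a K-linear subspace of Mat_{n×n}(K) (i.e. closed under addition and under multiplication by scalars from K) if and only if S is a division algebra over K, i.e. (k∘x)∘a = k∘(x∘a) = x∘(k∘a) for all k ∈ K and all x, a ∈ S. -/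
/-- A (finite) semifield is a quasifield that is also left distributive. -/
structure IsSemifield {Q : Type*} [AddCommGroup Q] (mul : Q → Q → Q) (e : Q)
    extends IsQuasifield mul e : Prop where
  mul_add : ∀ a b c, mul a (b + c) = mul a b + mul a c

/-- Let `S` be a finite semifield, `K` a subfield of `Ker S` (a finite field
embedded in `S` via `ι`, landing in the kernel) with `dim_K S = n`, and for
`a ∈ S` let `R a` be the matrix of `x ↦ x ∘ a` with respect to a fixed
`K`-basis of `S` whose first vector is the identity `e`.  Then the code
`C = {R a : a ∈ S}` is a `K`-linear subspace of `Mat_{n×n}(K)` (closed under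
addition and scalar multiplication by `K`) if and only if `S` is a division
algebra over `K`, i.e. `(k ∘ x) ∘ a = k ∘ (x ∘ a) = x ∘ (k ∘ a)` for all
`k ∈ K` and `x, a ∈ S`. -/
theorem linear_MRD_code_iff_division_algebra
    {S : Type*} [AddCommGroup S] [Fintype S] (mul : S → S → S) (e : S)
    (hS : IsSemifield mul e)
    {K : Type*} [Field K] [Fintype K] (ι : K → S)
    (hι_inj : Function.Injective ι)
    (hι_add : ∀ k k', ι (k + k') = ι k + ι k')
    (hι_mul : ∀ k k', ι (k * k') = mul (ι k) (ι k'))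
    (hι_one : ι 1 = e)
    (hι_ker : ∀ k, ι k ∈ QKernel mul)
    {n : ℕ} (hn : 0 < n) (b : Fin n → S) (rep : S → Fin n → K)
    (hb0 : b ⟨0, hn⟩ = e)
    (hrep : ∀ x : S, x = ∑ i, mul (ι (rep x i)) (b i))
    (hrep_unique : ∀ (x : S) (c : Fin n → K), x = ∑ i, mul (ι (c i)) (b i) → c = rep x)
    (R : S → Matrix (Fin n) (Fin n) K)
    (hR : ∀ x a : S, rep (mul x a) = Matrix.vecMul (rep x) (R a)) :
    ((∀ A ∈ Set.range R, ∀ B ∈ Set.range R, A + B ∈ Set.range R) ∧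
        (∀ (k : K), ∀ A ∈ Set.range R, k • A ∈ Set.range R)) ↔
      (∀ (k : K) (x a : S),
        mul (mul (ι k) x) a = mul (ι k) (mul x a) ∧
        mul (ι k) (mul x a) = mul x (mul (ι k) a)) := by
  -- `rep` is injective
  have rep_inj : Function.Injective rep := by
    intro x y h
    rw [hrep x, hrep y, h]
  -- kernel elements distribute over finite sums
  have mul_sum : ∀ (k : K) (s : Finset (Fin n)) (f : Fin n → S),
      mul (ι k) (∑ i ∈ s, f i) = ∑ i ∈ s, mul (ι k) (f i) := by
    intro k s f
    induction s using Finset.induction_on with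
    | empty => simpa using hS.mul_zero (ι k)
    | insert _ _ h ih => rw [Finset.sum_insert h, Finset.sum_insert h, (hι_ker k _ _).1, ih]
  -- rep of a scalar multiple
  have rep_smul : ∀ (k : K) (x : S), rep (mul (ι k) x) = k • rep x := by
    intro k x
    have : mul (ι k) x = ∑ i, mul (ι ((k • rep x) i)) (b i) := by
      conv_lhs => rw [hrep x]
      rw [mul_sum]
      refine Finset.sum_congr rfl fun i _ => ?_
      rw [(hι_ker k _ _).2, ← hι_mul]
      rfl
    exact (hrep_unique _ _ this).symm
  -- rep is additive
  have rep_add : ∀ x y : S, rep (x + y) = rep x + rep y := by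
    intro x y
    have : x + y = ∑ i, mul (ι ((rep x + rep y) i)) (b i) := by
      conv_lhs => rw [hrep x, hrep y]
      rw [← Finset.sum_add_distrib]
      refine Finset.sum_congr rfl fun i _ => ?_
      rw [← hS.add_mul, ← hι_add]
      rfl
    exact (hrep_unique _ _ this).symm
  -- rep is surjective
  have rep_surj : ∀ c : Fin n → K, ∃ x, rep x = c := fun c =>
    ⟨∑ i, mul (ι (c i)) (b i), (hrep_unique _ c rfl).symm⟩
  -- matrices are determined by their action on all rep vectors
  have mat_ext : ∀ M M' : Matrix (Fin n) (Fin n) K,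
      (∀ x : S, Matrix.vecMul (rep x) M = Matrix.vecMul (rep x) M') → M = M' := by
    intro M M' h
    ext i j
    obtain ⟨x, hx⟩ := rep_surj (Pi.single i 1)
    have h2 := congrFun (h x) j
    rw [hx] at h2
    simpa [Matrix.vecMul, dotProduct, Pi.single_apply] using h2
  -- vecMul and matrix scalar multiplication
  have vecMul_smul' : ∀ (v : Fin n → K) (k : K) (M : Matrix (Fin n) (Fin n) K),
      Matrix.vecMul v (k • M) = k • Matrix.vecMul v M := by
    intro v k M
    funext j
    simp [Matrix.vecMul, dotProduct, Finset.mul_sum, mul_left_comm]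
  constructor
  · rintro ⟨-, hsmul⟩ k x a
    refine ⟨(hι_ker k x a).2.symm, ?_⟩
    obtain ⟨a', ha'⟩ := hsmul k (R a) ⟨a, rfl⟩
    have key : ∀ y : S, mul y a' = mul (ι k) (mul y a) := by
      intro y
      apply rep_inj
      rw [hR, ha', rep_smul, hR, vecMul_smul']
    have he : a' = mul (ι k) a := by
      have h3 := key e
      rwa [hS.one_mul, hS.one_mul] at h3
    rw [← he]
    exact (key x).symm
  · rintro hdiv
    constructor
    · rintro A ⟨a, rfl⟩ B ⟨a', rfl⟩
      refine ⟨a + a', mat_ext _ _ fun x => ?_⟩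
      rw [← hR, Matrix.vecMul_add, ← hR, ← hR, ← rep_add, ← hS.mul_add]
    · rintro k A ⟨a, rfl⟩
      refine ⟨mul (ι k) a, mat_ext _ _ fun x => ?_⟩
      rw [← hR, ← (hdiv k x a).2, rep_smul, hR, vecMul_smul']
end

section
/- Let K = F_q and let C = {A(w) : w ∈ K^n} and C' = {A'(w) : w ∈ K^n} be K-linear MRD codes in Mat_{n×n}(K) with minimum distance n, where A(w) (resp. A'(w)) is the unique element of C (resp. C') with first row w, and let D and D' be the corresponding division algebras on K^n with multiplications w_1 ∘ w_2 = w_1 A(w_2) and w_1 ∘' w_2 = w_1 A'(w_2). Suppose there exist X, Y ∈ GL(n,K) such that {X A(w) Y : w ∈ K^n} = C' or {X A(w)^t Y : w ∈ K^n} = C'. Then D' is isotopic over K to D or to the transpose algebra D^t: there exist K-linear bijections F, G, H : K^n → K^n such that wF ∘' w'G = (w ∘ w')H for all w, w' (with ∘ replaced by the multiplication w_1 ∘^t w_2 = w_1 A(w_2)^t of D^t in the second case). -/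
/-- The linear equivalence of `K^n` given by right multiplication by an
invertible matrix. -/
def vecMulEquiv {K : Type*} [Field K] {n : ℕ}
    (u : (Matrix (Fin n) (Fin n) K)ˣ) : (Fin n → K) ≃ₗ[K] (Fin n → K) where
  toFun w := Matrix.vecMul w (u : Matrix (Fin n) (Fin n) K)
  invFun w := Matrix.vecMul w ((u⁻¹ : (Matrix (Fin n) (Fin n) K)ˣ) : Matrix (Fin n) (Fin n) K)
  map_add' x y := Matrix.add_vecMul _ x y
  map_smul' k x := Matrix.smul_vecMul k x _
  left_inv w := show Matrix.vecMul (Matrix.vecMul w (u : Matrix (Fin n) (Fin n) K))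
      ((u⁻¹ : (Matrix (Fin n) (Fin n) K)ˣ) : Matrix (Fin n) (Fin n) K) = w by
    rw [Matrix.vecMul_vecMul, Units.mul_inv, Matrix.vecMul_one]
  right_inv w := show Matrix.vecMul (Matrix.vecMul w
      ((u⁻¹ : (Matrix (Fin n) (Fin n) K)ˣ) : Matrix (Fin n) (Fin n) K))
      (u : Matrix (Fin n) (Fin n) K) = w by
    rw [Matrix.vecMul_vecMul, Units.inv_mul, Matrix.vecMul_one]

theorem vecMulEquiv_apply {K : Type*} [Field K] {n : ℕ}
    (u : (Matrix (Fin n) (Fin n) K)ˣ) (w : Fin n → K) :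
    vecMulEquiv u w = Matrix.vecMul w (u : Matrix (Fin n) (Fin n) K) := rfl

/-- Main technical step: if the image of the code `{B w}` under `M ↦ X M Y`
is the code `{A' w}`, then the corresponding algebras are isotopic. -/
theorem isotopy_of_code_image {K : Type*} [Field K] [Fintype K] {n : ℕ} (hn : 0 < n)
    (B A' : (Fin n → K) → Matrix (Fin n) (Fin n) K)
    (hrow' : ∀ w, A' w ⟨0, hn⟩ = w)
    (hBlin : ∀ (k : K) (w w'), B (k • w + w') = k • B w + B w')
    (hBinj : Function.Injective B)
    (X Y : Matrix (Fin n) (Fin n) K) (hX : IsUnit X) (hY : IsUnit Y)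
    (heq : (fun M => X * M * Y) '' Set.range B = Set.range A') :
    ∃ F G H : (Fin n → K) ≃ₗ[K] (Fin n → K),
      ∀ w₁ w₂ : Fin n → K,
        Matrix.vecMul (F w₁) (A' (G w₂)) = H (Matrix.vecMul w₁ (B w₂)) := by
  rcases hX with ⟨U, rfl⟩
  rcases hY with ⟨V, rfl⟩
  have hB0 : B 0 = 0 := by
    have h := hBlin 1 0 0
    simp only [one_smul, add_zero] at h
    exact left_eq_add.mp h
  set g : (Fin n → K) → (Fin n → K) := fun w => ((U : Matrix (Fin n) (Fin n) K) * B w * V) ⟨0, hn⟩ with hg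
  have key : ∀ w, A' (g w) = (U : Matrix (Fin n) (Fin n) K) * B w * V := by
    intro w
    have hmem : (U : Matrix (Fin n) (Fin n) K) * B w * V ∈ Set.range A' := by
      rw [← heq]; exact ⟨B w, ⟨w, rfl⟩, rfl⟩
    obtain ⟨v, hv⟩ := hmem
    have : g w = v := by rw [hg]; simp only [← hv, hrow']
    rw [this, hv]
  have glin : ∀ (k : K) (w w'), g (k • w + w') = k • g w + g w' := by
    intro k w w'
    simp only [hg, hBlin, Matrix.add_mul, Matrix.mul_add, Matrix.smul_mul,
      Matrix.mul_smul]
    rfl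
  have h0 : g 0 = 0 := by
    funext i
    simp [hg, hB0]
  have ginj : Function.Injective g := by
    intro w w' h
    have h2 : (U : Matrix (Fin n) (Fin n) K) * B w * V
        = (U : Matrix (Fin n) (Fin n) K) * B w' * V := by rw [← key, ← key, h]
    have h3 : (U : Matrix (Fin n) (Fin n) K) * B w
        = (U : Matrix (Fin n) (Fin n) K) * B w' := V.isUnit.mul_right_cancel h2
    exact hBinj (U.isUnit.mul_left_cancel h3)
  let Gl : (Fin n → K) →ₗ[K] (Fin n → K) :=
    { toFun := g
      map_add' := fun x y => by
        have := glin 1 x y; simpa using this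
      map_smul' := fun k x => by
        have := glin k x 0; simpa [h0] using this }
  have ginj' : Function.Injective Gl := ginj
  have gsurj : Function.Surjective Gl :=
    LinearMap.injective_iff_surjective.mp ginj'
  refine ⟨vecMulEquiv U⁻¹, LinearEquiv.ofBijective Gl ⟨ginj', gsurj⟩,
    vecMulEquiv V, fun w₁ w₂ => ?_⟩
  have hGl : (LinearEquiv.ofBijective Gl ⟨ginj', gsurj⟩) w₂ = g w₂ := rfl
  rw [hGl, key, vecMulEquiv_apply, vecMulEquiv_apply, Matrix.vecMul_vecMul,
    Matrix.vecMul_vecMul]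
  refine congrArg (Matrix.vecMul w₁) ?_
  rw [← mul_assoc, ← mul_assoc, Units.inv_mul, one_mul]

/-- Let `C = {A w}` and `C' = {A' w}` be `K`-linear MRD codes in
`Mat_{n×n}(K)` with minimum distance `n` over a finite field `K`, where `A w`
(resp. `A' w`) is the unique element of the code with first row `w`, with
corresponding division algebras on `K^n` given by `w₁ ∘ w₂ = w₁ ⬝ A w₂` and
`w₁ ∘' w₂ = w₁ ⬝ A' w₂`.  If there are `X, Y ∈ GL(n,K)` with
`{X (A w) Y} = C'` or `{X (A w)ᵀ Y} = C'`, then the division algebra of `C'`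
is isotopic over `K` to that of `C` or to its transpose: there are `K`-linear
bijections `F, G, H` of `K^n` with `wF ∘' w'G = (w ∘ w')H` for all `w, w'`
(with `∘` replaced by `w₁ ∘ᵗ w₂ = w₁ ⬝ (A w₂)ᵀ` in the transpose case). -/
theorem equivalent_MRD_codes_give_isotopic_division_algebras
    {K : Type*} [Field K] [Fintype K] {n : ℕ} (hn : 0 < n)
    (A A' : (Fin n → K) → Matrix (Fin n) (Fin n) K)
    (hrow : ∀ w, A w ⟨0, hn⟩ = w)
    (hrow' : ∀ w, A' w ⟨0, hn⟩ = w)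
    (hlin : ∀ (k : K) (w w'), A (k • w + w') = k • A w + A w')
    (hlin' : ∀ (k : K) (w w'), A' (k • w + w') = k • A' w + A' w')
    (hid : A (Pi.single (⟨0, hn⟩ : Fin n) (1 : K)) = 1)
    (hid' : A' (Pi.single (⟨0, hn⟩ : Fin n) (1 : K)) = 1)
    (hunit : ∀ w w', w ≠ w' → IsUnit (A w - A w'))
    (hunit' : ∀ w w', w ≠ w' → IsUnit (A' w - A' w'))
    (X Y : Matrix (Fin n) (Fin n) K) (hX : IsUnit X) (hY : IsUnit Y)
    (hequiv : (fun M => X * M * Y) '' Set.range A = Set.range A' ∨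
              (fun M => X * M.transpose * Y) '' Set.range A = Set.range A') :
    ∃ F G H : (Fin n → K) ≃ₗ[K] (Fin n → K),
      (∀ w₁ w₂ : Fin n → K,
          Matrix.vecMul (F w₁) (A' (G w₂)) = H (Matrix.vecMul w₁ (A w₂))) ∨
      (∀ w₁ w₂ : Fin n → K,
          Matrix.vecMul (F w₁) (A' (G w₂)) = H (Matrix.vecMul w₁ (A w₂).transpose)) := by
  have hAinj : Function.Injective A := by
    intro w w' h
    have := congrArg (fun M => M ⟨0, hn⟩) h
    simpa [hrow] using this
  rcases hequiv with heq | heq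
  · obtain ⟨F, G, H, hFGH⟩ :=
      isotopy_of_code_image hn A A' hrow' hlin hAinj X Y hX hY heq
    exact ⟨F, G, H, Or.inl hFGH⟩
  · have heq2 : (fun M => X * M * Y) '' Set.range (fun w => (A w).transpose)
        = Set.range A' := by
      rw [← heq]
      have : Set.range (fun w => (A w).transpose)
          = Matrix.transpose '' Set.range A := by
        rw [← Set.range_comp]; rfl
      rw [this, Set.image_image]
    obtain ⟨F, G, H, hFGH⟩ :=
      isotopy_of_code_image hn (fun w => (A w).transpose) A' hrow'
        (fun k w w' => show (A (k • w + w')).transpose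
            = k • (A w).transpose + (A w').transpose by
          rw [hlin]; simp [Matrix.transpose_add, Matrix.transpose_smul])
        (fun w w' h => hAinj (by simpa using congrArg Matrix.transpose h))
        X Y hX hY heq2
    exact ⟨F, G, H, Or.inr hFGH⟩
end

section
/- Let Q be a finite (right) quasifield, K a subfield of Ker Q with dim_K Q = n, and let C = {R(a) : a ∈ Q} ⊆ Mat_{n×n}(K) be the corresponding MRD code, where R(a) is the matrix of x ↦ x∘a with respect to a fixed K-basis and R(e) is the identity matrix. Suppose there exist X, Y ∈ GL(n,K) such that every matrix X R(a) Y (a ∈ Q) is symmetric. Then Z := Y X^{-t} is symmetric and invertible, and the K-bilinear form defined on Q (identified with row vectors K^n) by ⟨x, y⟩_Z := x Z y^t is a non-degenerate symmetric invariant form on Q, i.e. ⟨x∘a, y⟩_Z = ⟨x, y∘a⟩_Z for all a, x, y ∈ Q. -/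
/-- Let `Q` be a finite quasifield, `K` a subfield of `Ker Q` with
`dim_K Q = n`, and `C = {R a : a ∈ Q}` the corresponding MRD code, where `R a`
is the matrix of `x ↦ x ∘ a` in a fixed `K`-basis whose first vector is the
identity `e` (so `R e = 1`).  If there are `X, Y ∈ GL(n,K)` such that every
matrix `X (R a) Y` is symmetric, then `Z := Y X⁻ᵀ` is symmetric and
invertible, and `⟨x, y⟩_Z := (rep x) Z (rep y)ᵀ` is a non-degenerate symmetric
invariant `K`-bilinear form on `Q`, i.e.
`⟨x ∘ a, y⟩_Z = ⟨x, y ∘ a⟩_Z` for all `a, x, y ∈ Q`. -/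
theorem symmetric_equivalent_code_gives_invariant_form
    {Q : Type*} [AddCommGroup Q] [Fintype Q] (mul : Q → Q → Q) (e : Q)
    (hQ : IsQuasifield mul e)
    {K : Type*} [Field K] [Fintype K] (ι : K → Q)
    (hι_inj : Function.Injective ι)
    (hι_add : ∀ k k', ι (k + k') = ι k + ι k')
    (hι_mul : ∀ k k', ι (k * k') = mul (ι k) (ι k'))
    (hι_one : ι 1 = e)
    (hι_ker : ∀ k, ι k ∈ QKernel mul)
    {n : ℕ} (hn : 0 < n) (b : Fin n → Q) (rep : Q → Fin n → K)
    (hb0 : b ⟨0, hn⟩ = e)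
    (hrep : ∀ x : Q, x = ∑ i, mul (ι (rep x i)) (b i))
    (hrep_unique : ∀ (x : Q) (c : Fin n → K), x = ∑ i, mul (ι (c i)) (b i) → c = rep x)
    (R : Q → Matrix (Fin n) (Fin n) K)
    (hR : ∀ x a : Q, rep (mul x a) = Matrix.vecMul (rep x) (R a))
    (X Y : Matrix (Fin n) (Fin n) K) (hX : IsUnit X) (hY : IsUnit Y)
    (hsymm : ∀ a : Q, (X * R a * Y).IsSymm) :
    letI Z : Matrix (Fin n) (Fin n) K := Y * (X.transpose)⁻¹
    letI form : Q → Q → K :=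
      fun x y => dotProduct (Matrix.vecMul (rep x) Z) (rep y)
    Z.IsSymm ∧ IsUnit Z ∧
      (∀ x y, form x y = form y x) ∧
      (∀ x, (∀ y, form x y = 0) → x = 0) ∧
      (∀ a x y, form (mul x a) y = form x (mul y a)) := by
  have hXd : IsUnit X.det := (Matrix.isUnit_iff_isUnit_det X).mp hX
  have hYd : IsUnit Y.det := (Matrix.isUnit_iff_isUnit_det Y).mp hY
  have hXt : IsUnit X.transpose.det := by rw [Matrix.det_transpose]; exact hXd
  have hYt : IsUnit Y.transpose.det := by rw [Matrix.det_transpose]; exact hYd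
  have hι0 : ι 0 = 0 := by
    have h := hι_add 0 0
    rw [add_zero] at h
    have h2 := congrArg (fun t => t - ι 0) h
    simpa using h2.symm
  have hsurj : Function.Surjective rep := fun c =>
    ⟨∑ i, mul (ι (c i)) (b i), (hrep_unique _ c rfl).symm⟩
  have hzero : ∀ x : Q, rep x = 0 → x = 0 := by
    intro x hx
    have h := hrep x
    rw [hx] at h
    simpa [hι0, hQ.zero_mul] using h
  have hRe : R e = 1 := by
    ext i j
    obtain ⟨x, hx⟩ := hsurj (Pi.single i 1)
    have h := hR x e
    rw [hQ.mul_one, hx, Matrix.single_one_vecMul, Matrix.row_apply'] at h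
    rw [← congrFun h j, Matrix.one_apply, Pi.single_apply]
    simp [eq_comm]
  have hXY : Y.transpose * X.transpose = X * Y := by
    have h := hsymm e
    rw [Matrix.IsSymm, hRe, mul_one, Matrix.transpose_mul] at h
    exact h
  have h4 : Y * X.transpose⁻¹ * Y.transpose⁻¹ * X = 1 := by
    calc Y * X.transpose⁻¹ * Y.transpose⁻¹ * X
        = Y * (X.transpose⁻¹ * Y.transpose⁻¹) * X := by rw [mul_assoc Y]
      _ = Y * (Y.transpose * X.transpose)⁻¹ * X := by rw [Matrix.mul_inv_rev]
      _ = Y * (X * Y)⁻¹ * X := by rw [hXY]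
      _ = Y * (Y⁻¹ * X⁻¹) * X := by rw [Matrix.mul_inv_rev]
      _ = 1 := by
          rw [← mul_assoc, Matrix.mul_nonsing_inv _ hYd, one_mul,
            Matrix.nonsing_inv_mul _ hXd]
  have hkey : ∀ a, R a * (Y * X.transpose⁻¹) = (Y * X.transpose⁻¹) * (R a).transpose := by
    intro a
    have hs := hsymm a
    rw [Matrix.IsSymm, Matrix.transpose_mul, Matrix.transpose_mul] at hs
    have h2 : (R a).transpose * X.transpose = Y.transpose⁻¹ * (X * R a * Y) := by
      rw [← hs, ← mul_assoc, Matrix.nonsing_inv_mul _ hYt, one_mul]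
    have h3 : (R a).transpose = Y.transpose⁻¹ * (X * R a * Y) * X.transpose⁻¹ := by
      rw [← h2, mul_assoc, Matrix.mul_nonsing_inv _ hXt, mul_one]
    have h5 : Y * X.transpose⁻¹ * (R a).transpose = R a * (Y * X.transpose⁻¹) := by
      calc Y * X.transpose⁻¹ * (R a).transpose
          = Y * X.transpose⁻¹ * (Y.transpose⁻¹ * (X * R a * Y) * X.transpose⁻¹) := by
            rw [← h3]
        _ = Y * X.transpose⁻¹ * Y.transpose⁻¹ * X * (R a * (Y * X.transpose⁻¹)) := by
            simp only [mul_assoc]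
        _ = R a * (Y * X.transpose⁻¹) := by rw [h4, one_mul]
    exact h5.symm
  have hZs : (Y * X.transpose⁻¹).transpose = Y * X.transpose⁻¹ := by
    rw [Matrix.transpose_mul, Matrix.transpose_nonsing_inv, Matrix.transpose_transpose]
    calc X⁻¹ * Y.transpose
        = X⁻¹ * (Y.transpose * X.transpose) * X.transpose⁻¹ := by
          rw [mul_assoc X⁻¹, mul_assoc Y.transpose, Matrix.mul_nonsing_inv _ hXt, mul_one]
      _ = X⁻¹ * (X * Y) * X.transpose⁻¹ := by rw [hXY]
      _ = Y * X.transpose⁻¹ := by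
          rw [← mul_assoc, Matrix.nonsing_inv_mul _ hXd, one_mul]
  have hZu : IsUnit (Y * X.transpose⁻¹) :=
    hY.mul (Matrix.isUnit_nonsing_inv_iff.mpr ((Matrix.isUnit_iff_isUnit_det _).mpr hXt))
  refine ⟨hZs, hZu, ?_, ?_, ?_⟩
  · -- symmetry of the form
    intro x y
    show dotProduct (Matrix.vecMul (rep x) (Y * X.transpose⁻¹)) (rep y)
        = dotProduct (Matrix.vecMul (rep y) (Y * X.transpose⁻¹)) (rep x)
    calc dotProduct (Matrix.vecMul (rep x) (Y * X.transpose⁻¹)) (rep y)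
        = dotProduct (rep x) (Matrix.mulVec (Y * X.transpose⁻¹) (rep y)) :=
          (Matrix.dotProduct_mulVec _ _ _).symm
      _ = dotProduct (rep x) (Matrix.vecMul (rep y) (Y * X.transpose⁻¹).transpose) := by
          rw [← Matrix.vecMul_transpose]
      _ = dotProduct (rep x) (Matrix.vecMul (rep y) (Y * X.transpose⁻¹)) := by rw [hZs]
      _ = dotProduct (Matrix.vecMul (rep y) (Y * X.transpose⁻¹)) (rep x) :=
          dotProduct_comm _ _
  · -- nondegeneracy
    intro x hx
    apply hzero
    have hv : Matrix.vecMul (rep x) (Y * X.transpose⁻¹) = 0 := by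
      funext j
      obtain ⟨y, hy⟩ := hsurj (Pi.single j 1)
      have h : dotProduct (Matrix.vecMul (rep x) (Y * X.transpose⁻¹)) (rep y) = 0 :=
        hx y
      rw [hy] at h
      simpa [dotProduct_single] using h
    have h := congrArg (fun v => Matrix.vecMul v (Y * X.transpose⁻¹)⁻¹) hv
    simpa [Matrix.vecMul_vecMul,
      Matrix.mul_nonsing_inv _ ((Matrix.isUnit_iff_isUnit_det _).mp hZu)] using h
  · -- invariance
    intro a x y
    show dotProduct (Matrix.vecMul (rep (mul x a)) (Y * X.transpose⁻¹)) (rep y)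
        = dotProduct (Matrix.vecMul (rep x) (Y * X.transpose⁻¹)) (rep (mul y a))
    calc dotProduct (Matrix.vecMul (rep (mul x a)) (Y * X.transpose⁻¹)) (rep y)
        = dotProduct
            (Matrix.vecMul (Matrix.vecMul (rep x) (Y * X.transpose⁻¹)) (R a).transpose)
            (rep y) := by
          rw [hR x a, Matrix.vecMul_vecMul, hkey a, ← Matrix.vecMul_vecMul]
      _ = dotProduct (Matrix.vecMul (rep x) (Y * X.transpose⁻¹))
            (Matrix.mulVec (R a).transpose (rep y)) :=
          (Matrix.dotProduct_mulVec _ _ _).symm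
      _ = dotProduct (Matrix.vecMul (rep x) (Y * X.transpose⁻¹)) (rep (mul y a)) := by
          rw [Matrix.mulVec_transpose, ← hR y a]
end

section
/- Let q be a prime power, n ≥ 1, E = F_{q^n}, K = F_q, and fix a K-basis x_1, …, x_n of E. For a ∈ E let G_a ∈ Mat_{n×n}(F_q) be the matrix with entries (G_a)_{ij} = Tr_{E/K}(a x_i x_j), where Tr_{E/K} is the field trace. Then: (1) each G_a is symmetric; (2) the map a ↦ G_a is K-linear and injective; (3) G_a − G_b = G_{a−b} is invertible for all a ≠ b in E. Hence {G_a : a ∈ E} is a symmetric F_q-linear MRD code in Mat_{n×n}(F_q) of size q^n with minimum distance n. -/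
/-- Let `K = F_q` and `E = F_{q^n}` (`n ≥ 1`) with a fixed `K`-basis
`x₁, …, xₙ` of `E`, and for `a ∈ E` let `Gₐ` be the matrix with entries
`(Gₐ)ᵢⱼ = Tr_{E/K}(a xᵢ xⱼ)`.  Then each `Gₐ` is symmetric, the map `a ↦ Gₐ`
is `K`-linear and injective, and `Gₐ − G_b = G_{a−b}` is invertible for all
`a ≠ b` in `E`.  Hence `{Gₐ : a ∈ E}` is a symmetric `F_q`-linear MRD code in
`Mat_{n×n}(F_q)` of size `q^n` with minimum distance `n`. -/
theorem trace_form_gives_symmetric_MRD_code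
    {K E : Type*} [Field K] [Fintype K] [Field E] [Fintype E] [Algebra K E]
    {n : ℕ} (hn : 1 ≤ n) (x : Module.Basis (Fin n) K E) :
    letI Gmat : E → Matrix (Fin n) (Fin n) K :=
      fun a => Matrix.of fun i j => Algebra.trace K E (a * x i * x j)
    (∀ a : E, (Gmat a).IsSymm) ∧
      (∀ a b : E, Gmat (a + b) = Gmat a + Gmat b) ∧
      (∀ (k : K) (a : E), Gmat (k • a) = k • Gmat a) ∧
      Function.Injective Gmat ∧
      (∀ a b : E, a ≠ b → IsUnit (Gmat a - Gmat b)) ∧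
      (Set.range Gmat).ncard = Fintype.card K ^ n := by
  set Gmat : E → Matrix (Fin n) (Fin n) K :=
    fun a => Matrix.of fun i j => Algebra.trace K E (a * x i * x j) with hG
  haveI : FiniteDimensional K E := Module.Finite.of_basis x
  haveI : NeZero n := ⟨by omega⟩
  -- additivity
  have hadd : ∀ a b : E, Gmat (a + b) = Gmat a + Gmat b := by
    intro a b
    ext i j
    simp [Gmat, add_mul, map_add]
  -- the bilinear form associated to `c`
  have hunit : ∀ c : E, c ≠ 0 → IsUnit (Gmat c) := by
    intro c hc
    set B : LinearMap.BilinForm K E :=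
      (Algebra.traceForm K E).comp (LinearMap.mulLeft K c) LinearMap.id with hB
    have hBapp : ∀ y z : E, B y z = Algebra.trace K E (c * y * z) := by
      intro y z
      simp [hB, Algebra.traceForm_apply]
    have hnd : B.Nondegenerate := by
      refine LinearMap.BilinForm.Nondegenerate.ofSeparatingLeft ?_
      intro y hy
      have h1 : ∀ z : E, Algebra.traceForm K E (c * y) z = 0 := by
        intro z
        simpa [Algebra.traceForm_apply, hBapp] using hy z
      have h2 : c * y = 0 := (traceForm_nondegenerate K E).1 _ h1
      rcases mul_eq_zero.mp h2 with h | h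
      · exact absurd h hc
      · exact h
    have hmat : LinearMap.BilinForm.toMatrix x B = Gmat c := by
      ext i j
      simp [LinearMap.BilinForm.toMatrix_apply, hBapp, Gmat]
    have hdet : (Gmat c).det ≠ 0 := by
      rw [← hmat]
      exact (LinearMap.BilinForm.nondegenerate_iff_det_ne_zero x).mp hnd
    rw [Matrix.isUnit_iff_isUnit_det]
    exact isUnit_iff_ne_zero.mpr hdet
  have hsub : ∀ a b : E, Gmat a - Gmat b = Gmat (a - b) := by
    intro a b
    have := hadd (a - b) b
    rw [sub_add_cancel] at this
    rw [this, add_sub_cancel_right]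
  have hinj : Function.Injective Gmat := by
    intro a b hab
    by_contra hne
    have h := hunit (a - b) (sub_ne_zero.mpr hne)
    rw [← hsub, hab, sub_self] at h
    have : (0 : Matrix (Fin n) (Fin n) K).det = 0 :=
      Matrix.det_zero
    rw [Matrix.isUnit_iff_isUnit_det, this] at h
    exact not_isUnit_zero h
  refine ⟨?_, hadd, ?_, hinj, ?_, ?_⟩
  · intro a
    rw [Matrix.IsSymm]
    ext i j
    simp only [Matrix.transpose_apply, Gmat, Matrix.of_apply]
    congr 1
    ring
  · intro k a
    ext i j
    simp [Gmat, Algebra.smul_def, mul_assoc, mul_comm, mul_left_comm,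
      ← Algebra.smul_def]
  · intro a b hab
    rw [hsub]
    exact hunit (a - b) (sub_ne_zero.mpr hab)
  · rw [← Nat.card_coe_set_eq, Nat.card_range_of_injective hinj,
      Nat.card_eq_fintype_card, Module.card_fintype x, Fintype.card_fin]
end
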